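/- Let ψ be a unit vector in ℂ^{d_1}⊗ℂ^{d_2} with Schmidt decomposition ψ = ∑_i λ_i e_i ⊗ f_i and largest Schmidt coefficient λ = max_i λ_i. Then the fidelity of separability of the pure state |ψ⟩⟨ψ| equals λ²: F_sep(|ψ⟩⟨ψ|) = λ². -/

import Mathlib

open scoped BigOperators ComplexOrder

noncomputable section

/-- Inner product `⟨u,v⟩ = ∑ x, conj (u x) * v x` on functions `ι → ℂ`. -/
def inn {ι : Type*} [Fintype ι] (u v : ι → ℂ) : ℂ := ∑ x, star (u x) * v x

/-- Unit vector. -/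
def IsUnitVec {ι : Type*} [Fintype ι] (v : ι → ℂ) : Prop := inn v v = 1

/-- Rank-one projector `|v⟩⟨v|`. -/
def proj {ι : Type*} [Fintype ι] (v : ι → ℂ) : Matrix ι ι ℂ :=
  fun x y => v x * star (v y)

/-- Positive semidefinite square root (zero on non-PSD matrices). -/
def psqrt {ι : Type*} [Fintype ι] [DecidableEq ι] (A : Matrix ι ι ℂ) : Matrix ι ι ℂ :=
  open scoped Classical in if h : A.PosSemidef then
    (h.1.eigenvectorUnitary : Matrix ι ι ℂ) * Matrix.diagonal ((↑) ∘ (√·) ∘ h.1.eigenvalues) *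
      (star h.1.eigenvectorUnitary : Matrix ι ι ℂ) else 0

/-- Fidelity `F(ρ,σ) = (Tr √(√ρ σ √ρ))²`. -/
def fid {ι : Type*} [Fintype ι] [DecidableEq ι] (ρ σ : Matrix ι ι ℂ) : ℝ :=
  ((psqrt (psqrt ρ * σ * psqrt ρ)).trace.re) ^ 2

/-- Product vector on the bipartite Hilbert space. -/
def IsProdVec2 {d1 d2 : ℕ} (v : Fin d1 × Fin d2 → ℂ) : Prop :=
  ∃ (a : Fin d1 → ℂ) (b : Fin d2 → ℂ), ∀ x, v x = a x.1 * b x.2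

/-- Separable state: finite convex combination of projectors onto product unit vectors. -/
def IsSepState2 {d1 d2 : ℕ} (σ : Matrix (Fin d1 × Fin d2) (Fin d1 × Fin d2) ℂ) : Prop :=
  ∃ (k : ℕ) (p : Fin k → ℝ) (φ : Fin k → Fin d1 × Fin d2 → ℂ),
    (∀ i, 0 ≤ p i) ∧ ∑ i, p i = 1 ∧
    (∀ i, IsProdVec2 (φ i) ∧ IsUnitVec (φ i)) ∧
    σ = ∑ i, (p i : ℂ) • proj (φ i)

/-- Fidelity of separability. -/
def Fsep2 {d1 d2 : ℕ} (ρ : Matrix (Fin d1 × Fin d2) (Fin d1 × Fin d2) ℂ) : ℝ :=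
  sSup {x | ∃ σ, IsSepState2 σ ∧ x = fid ρ σ}

section Aux

open Matrix

variable {ι : Type*} [Fintype ι] [DecidableEq ι]


lemma quad_proj (v x : ι → ℂ) : star x ⬝ᵥ (proj v *ᵥ x) = star (inn v x) * (inn v x) := by
  simp only [dotProduct, Matrix.mulVec, proj, inn, dotProduct, star_sum, StarMul.star_mul,
    star_star, Pi.star_apply, Finset.mul_sum, Finset.sum_mul]
  rw [Finset.sum_comm]
  refine Finset.sum_congr rfl fun a _ => Finset.sum_congr rfl fun b _ => ?_
  ring

lemma proj_posSemidef (v : ι → ℂ) : (proj v).PosSemidef := by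
  refine Matrix.PosSemidef.of_dotProduct_mulVec_nonneg ?_ fun x => ?_
  · ext x y
    simp [proj, Matrix.conjTranspose_apply, mul_comm]
  · rw [quad_proj]
    exact star_mul_self_nonneg _

lemma proj_mul_mul (v : ι → ℂ) (M : Matrix ι ι ℂ) :
    proj v * M * proj v = (star v ⬝ᵥ (M *ᵥ v)) • proj v := by
  ext x y
  simp only [Matrix.mul_apply, proj, Matrix.smul_apply, dotProduct, Matrix.mulVec,
    Pi.star_apply, smul_eq_mul, Finset.sum_mul, Finset.mul_sum]
  rw [Finset.sum_comm]
  exact Finset.sum_congr rfl fun a _ => Finset.sum_congr rfl fun b _ => by ring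

lemma trace_proj (v : ι → ℂ) : (proj v).trace = inn v v := by
  simp [Matrix.trace, proj, inn, mul_comm]

lemma smul_psd {c : ℝ} (hc : 0 ≤ c) {A : Matrix ι ι ℂ} (hA : A.PosSemidef) :
    ((c : ℂ) • A).PosSemidef := by
  refine Matrix.PosSemidef.of_dotProduct_mulVec_nonneg ?_ fun x => ?_
  · unfold Matrix.IsHermitian
    rw [Matrix.conjTranspose_smul, hA.1.eq]
    simp
  · rw [Matrix.smul_mulVec, dotProduct_smul, smul_eq_mul]
    exact mul_nonneg (by exact_mod_cast hc) (hA.dotProduct_mulVec_nonneg x)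

open scoped MatrixOrder in
lemma psqrt_smul_proj (v : ι → ℂ) (hv : IsUnitVec v) {c : ℝ} (hc : 0 ≤ c) :
    psqrt ((c : ℂ) • proj v) = ((Real.sqrt c : ℝ) : ℂ) • proj v := by
  have hP := proj_posSemidef v
  have hA : ((c : ℂ) • proj v).PosSemidef := smul_psd hc hP
  have hB : (((Real.sqrt c : ℝ) : ℂ) • proj v).PosSemidef := smul_psd (Real.sqrt_nonneg c) hP
  have h2 : proj v * proj v = proj v := by
    have h := proj_mul_mul v 1
    rw [Matrix.mul_one, Matrix.one_mulVec] at h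
    have hd : star v ⬝ᵥ v = inn v v := by simp [inn, dotProduct]
    rw [h, hd, hv, one_smul]
  have hsq : (((Real.sqrt c : ℝ) : ℂ) • proj v) ^ 2 = (c : ℂ) • proj v := by
    rw [sq, Matrix.smul_mul, Matrix.mul_smul, h2, smul_smul, ← Complex.ofReal_mul,
      Real.mul_self_sqrt hc]
  have hpsd : ∀ (A : Matrix ι ι ℂ) (hA' : A.PosSemidef), psqrt A = CFC.sqrt A := by
    intro A hA'
    rw [psqrt, dif_pos hA', CFC.sqrt_eq_cfc, cfc_nnreal_eq_real _ A hA'.nonneg, hA'.1.cfc_eq,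
      IsHermitian.cfc, Unitary.conjStarAlgAut_apply]
    unfold Real.sqrt
    rfl
  rw [hpsd _ hA]
  exact CFC.sqrt_unique (by rw [← sq]; exact hsq) hB.nonneg

lemma nonneg_complex_re {z : ℂ} (hz : 0 ≤ z) : z = ((z.re : ℝ) : ℂ) ∧ 0 ≤ z.re := by
  rw [Complex.le_def] at hz
  refine ⟨Complex.ext rfl ?_, hz.1⟩
  simp [← hz.2]

lemma fid_proj_eq (ψ : ι → ℂ) (hψ : IsUnitVec ψ) (σ : Matrix ι ι ℂ) (hσ : σ.PosSemidef) :
    fid (proj ψ) σ = (star ψ ⬝ᵥ (σ *ᵥ ψ)).re := by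
  have h1 : psqrt (proj ψ) = proj ψ := by
    simpa using psqrt_smul_proj ψ hψ (zero_le_one)
  set c := star ψ ⬝ᵥ (σ *ᵥ ψ) with hc
  obtain ⟨hcre, hre0⟩ := nonneg_complex_re (hσ.dotProduct_mulVec_nonneg ψ)
  have h2 : psqrt (proj ψ) * σ * psqrt (proj ψ) = ((c.re : ℝ) : ℂ) • proj ψ := by
    rw [h1, proj_mul_mul, ← hc, ← hcre]
  rw [fid, h2, psqrt_smul_proj ψ hψ hre0, Matrix.trace_smul, trace_proj, hψ]
  simp [Real.sq_sqrt hre0]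
  rfl


lemma sum_psd {n : ℕ} {A : Fin n → Matrix ι ι ℂ} (h : ∀ i, (A i).PosSemidef) :
    (∑ i, A i).PosSemidef := by
  classical
  refine Finset.sum_induction A Matrix.PosSemidef (fun a b ha hb => ha.add hb)
    Matrix.PosSemidef.zero (fun i _ => h i)

lemma sep_psd {d1 d2 : ℕ} {σ : Matrix (Fin d1 × Fin d2) (Fin d1 × Fin d2) ℂ}
    (h : IsSepState2 σ) : σ.PosSemidef := by
  obtain ⟨k, p, φ, hp, -, -, rfl⟩ := h
  exact sum_psd fun i => smul_psd (hp i) (proj_posSemidef (φ i))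

lemma quad_sum_eq {d1 d2 k : ℕ} (ψ : Fin d1 × Fin d2 → ℂ) (p : Fin k → ℝ)
    (φ : Fin k → Fin d1 × Fin d2 → ℂ) :
    (star ψ ⬝ᵥ ((∑ i, (p i : ℂ) • proj (φ i)) *ᵥ ψ)).re
      = ∑ i, p i * Complex.normSq (inn (φ i) ψ) := by
  have : star ψ ⬝ᵥ ((∑ i, (p i : ℂ) • proj (φ i)) *ᵥ ψ)
      = ∑ i, ((p i * Complex.normSq (inn (φ i) ψ) : ℝ) : ℂ) := by
    have hmv : (∑ i, (p i : ℂ) • proj (φ i)) *ᵥ ψ = ∑ i, ((p i : ℂ) • proj (φ i)) *ᵥ ψ := by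
      ext x
      simp only [Matrix.mulVec, dotProduct, Matrix.sum_apply, Finset.sum_apply, Finset.sum_mul]
      rw [Finset.sum_comm]
    rw [hmv]
    have hds : star ψ ⬝ᵥ (∑ i, ((p i : ℂ) • proj (φ i)) *ᵥ ψ)
        = ∑ i, star ψ ⬝ᵥ (((p i : ℂ) • proj (φ i)) *ᵥ ψ) := by
      simp only [dotProduct, Finset.sum_apply, Finset.mul_sum]
      exact Finset.sum_comm
    rw [hds]
    refine Finset.sum_congr rfl fun i _ => ?_
    rw [Matrix.smul_mulVec, dotProduct_smul, smul_eq_mul, quad_proj]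
    push_cast [Complex.normSq_eq_conj_mul_self]
    rfl
  rw [this, ← Complex.ofReal_sum, Complex.ofReal_re]

lemma inn_conj {u v : ι → ℂ} : star (inn u v) = inn v u := by
  simp only [inn, star_sum, StarMul.star_mul, star_star]

lemma inn_self_nonneg (u : ι → ℂ) : 0 ≤ inn u u :=
  Finset.sum_nonneg fun x _ => star_mul_self_nonneg _

lemma bessel {kk : ℕ} (v : Fin kk → ι → ℂ)
    (hv : ∀ i j, inn (v i) (v j) = if i = j then 1 else 0) (x : ι → ℂ) :
    ∑ i, ‖inn (v i) x‖ ^ 2 ≤ (inn x x).re := by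
  classical
  let V : Fin kk → EuclideanSpace ℂ ι := fun i => (WithLp.equiv 2 _).symm (v i)
  let X : EuclideanSpace ℂ ι := (WithLp.equiv 2 _).symm x
  have key : ∀ (u w : ι → ℂ),
      inn u w = @inner ℂ _ _ ((WithLp.equiv 2 (ι → ℂ)).symm u) ((WithLp.equiv 2 (ι → ℂ)).symm w) := by
    intro u w
    simp [inn, PiLp.inner_apply, RCLike.inner_apply, Complex.star_def]
    exact Finset.sum_congr rfl fun _ _ => mul_comm _ _
  have hV : Orthonormal ℂ V := by
    rw [orthonormal_iff_ite]
    intro i j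
    rw [← key, hv]
  have hb := hV.sum_inner_products_le (s := Finset.univ) X
  have hn : ‖X‖ ^ 2 = (inn x x).re := by
    rw [← @inner_self_eq_norm_sq ℂ, ← key]
    rfl
  rw [← hn]
  refine le_trans (le_of_eq ?_) hb
  exact Finset.sum_congr rfl fun i _ => by rw [key]

lemma inn_sum_right {kk : ℕ} (u : ι → ℂ) (g : Fin kk → ι → ℂ) :
    inn u (fun x => ∑ i, g i x) = ∑ i, inn u (g i) := by
  simp only [inn, Finset.mul_sum]
  rw [Finset.sum_comm]

lemma inn_const_mul (u w : ι → ℂ) (c : ℂ) :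
    inn u (fun x => c * w x) = c * inn u w := by
  simp only [inn, Finset.mul_sum]
  exact Finset.sum_congr rfl fun x _ => by ring

lemma inn_prod_factor {d1 d2 : ℕ} (a c : Fin d1 → ℂ) (b d : Fin d2 → ℂ) :
    inn (fun x : Fin d1 × Fin d2 => a x.1 * b x.2) (fun x => c x.1 * d x.2)
      = inn a c * inn b d := by
  simp only [inn, Fintype.sum_prod_type, Finset.sum_mul, Finset.mul_sum]
  rw [Finset.sum_comm]
  refine Finset.sum_congr rfl fun x2 _ => Finset.sum_congr rfl fun x1 _ => ?_
  simp only [star_mul']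
  ring

lemma inn_prodvec_psi {d1 d2 k : ℕ} (a : Fin d1 → ℂ) (b : Fin d2 → ℂ)
    (lam : Fin k → ℝ) (e : Fin k → Fin d1 → ℂ) (f : Fin k → Fin d2 → ℂ)
    (ψ : Fin d1 × Fin d2 → ℂ)
    (hdecomp : ∀ x, ψ x = ∑ i, (lam i : ℂ) * e i x.1 * f i x.2) :
    inn (fun x => a x.1 * b x.2) ψ
      = ∑ i, (lam i : ℂ) * (inn a (e i) * inn b (f i)) := by
  have hψ : ψ = fun x => ∑ i, (lam i : ℂ) * (fun y : Fin d1 × Fin d2 => e i y.1 * f i y.2) x := by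
    funext x
    rw [hdecomp]
    exact Finset.sum_congr rfl fun i _ => by ring
  rw [hψ, inn_sum_right]
  refine Finset.sum_congr rfl fun i _ => ?_
  rw [inn_const_mul, inn_prod_factor]

lemma prod_bound {d1 d2 k : ℕ}
    (lam : Fin k → ℝ) (hlam : ∀ i, 0 ≤ lam i)
    (e : Fin k → Fin d1 → ℂ) (f : Fin k → Fin d2 → ℂ)
    (he : ∀ i j, inn (e i) (e j) = if i = j then 1 else 0)
    (hf : ∀ i j, inn (f i) (f j) = if i = j then 1 else 0)
    (ψ : Fin d1 × Fin d2 → ℂ)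
    (hdecomp : ∀ x, ψ x = ∑ i, (lam i : ℂ) * e i x.1 * f i x.2)
    (l : ℝ) (hl : IsGreatest (Set.range lam) l)
    (a : Fin d1 → ℂ) (b : Fin d2 → ℂ)
    (hab : inn a a * inn b b = 1) :
    Complex.normSq (inn (fun x => a x.1 * b x.2) ψ) ≤ l ^ 2 := by
  obtain ⟨i0, hi0⟩ := hl.1
  have hl0 : 0 ≤ l := hi0 ▸ hlam i0
  set α : Fin k → ℝ := fun i => ‖inn a (e i)‖ with hα
  set β : Fin k → ℝ := fun i => ‖inn b (f i)‖ with hβ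
  have hflip : ∀ {ι : Type} [Fintype ι] (u w : ι → ℂ),
      ‖inn u w‖ = ‖inn w u‖ := by
    intro ι _ u w
    classical
    conv_rhs => rw [← inn_conj]
    rw [Complex.star_def, Complex.norm_conj]
  have hA : ∑ i, α i ^ 2 ≤ (inn a a).re := by
    refine le_trans (le_of_eq ?_) (bessel e he a)
    exact Finset.sum_congr rfl fun i _ => by rw [hα]; dsimp; rw [hflip]
  have hB : ∑ i, β i ^ 2 ≤ (inn b b).re := by
    refine le_trans (le_of_eq ?_) (bessel f hf b)
    exact Finset.sum_congr rfl fun i _ => by rw [hβ]; dsimp; rw [hflip]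
  obtain ⟨hare, ha0⟩ := nonneg_complex_re (inn_self_nonneg a)
  obtain ⟨hbre, hb0⟩ := nonneg_complex_re (inn_self_nonneg b)
  have hAB : (inn a a).re * (inn b b).re = 1 := by
    have h : (((inn a a).re * (inn b b).re : ℝ) : ℂ) = 1 := by
      push_cast
      rw [← hare, ← hbre, hab]
    exact_mod_cast h
  have hcs : (∑ i, α i * β i) ^ 2 ≤ (∑ i, α i ^ 2) * (∑ i, β i ^ 2) :=
    Finset.sum_mul_sq_le_sq_mul_sq _ _ _
  have hsnn : 0 ≤ ∑ i, α i * β i :=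
    Finset.sum_nonneg fun i _ => mul_nonneg (norm_nonneg _) (norm_nonneg _)
  have hsum1 : ∑ i, α i * β i ≤ 1 := by
    have hsq : (∑ i, α i * β i) ^ 2 ≤ 1 := by
      refine le_trans hcs ?_
      rw [← hAB]
      exact mul_le_mul hA hB (Finset.sum_nonneg fun i _ => sq_nonneg _) ha0
    nlinarith
  have habs : ‖inn (fun x => a x.1 * b x.2) ψ‖ ≤ l := by
    rw [inn_prodvec_psi a b lam e f ψ hdecomp]
    calc ‖∑ i, (lam i : ℂ) * (inn a (e i) * inn b (f i))‖
        ≤ ∑ i, ‖(lam i : ℂ) * (inn a (e i) * inn b (f i))‖ :=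
          norm_sum_le _ _
      _ = ∑ i, lam i * (α i * β i) := by
          refine Finset.sum_congr rfl fun i _ => ?_
          rw [norm_mul, norm_mul, Complex.norm_real, Real.norm_eq_abs, abs_of_nonneg (hlam i)]
      _ ≤ ∑ i, l * (α i * β i) := Finset.sum_le_sum fun i _ =>
          mul_le_mul_of_nonneg_right (hl.2 ⟨i, rfl⟩)
            (mul_nonneg (norm_nonneg _) (norm_nonneg _))
      _ = l * ∑ i, α i * β i := (Finset.mul_sum _ _ _).symm
      _ ≤ l * 1 := mul_le_mul_of_nonneg_left hsum1 hl0
      _ = l := mul_one l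
  rw [← Complex.sq_norm]
  exact pow_le_pow_left₀ (norm_nonneg _) habs 2

end Aux

open Matrix in
/-- for a bipartite pure state with largest Schmidt coefficient `l`,
the fidelity of separability of `|ψ⟩⟨ψ|` equals `l²`. -/
theorem fsep_pure_bipartite_eq_sq_max_schmidt (d1 d2 k : ℕ)
    (ψ : Fin d1 × Fin d2 → ℂ) (hψ : IsUnitVec ψ)
    (lam : Fin k → ℝ) (hlam : ∀ i, 0 ≤ lam i)
    (e : Fin k → Fin d1 → ℂ) (f : Fin k → Fin d2 → ℂ)
    (he : ∀ i j, inn (e i) (e j) = if i = j then 1 else 0)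
    (hf : ∀ i j, inn (f i) (f j) = if i = j then 1 else 0)
    (hdecomp : ∀ x, ψ x = ∑ i, (lam i : ℂ) * e i x.1 * f i x.2)
    (l : ℝ) (hl : IsGreatest (Set.range lam) l) :
    Fsep2 (proj ψ) = l ^ 2 := by
  obtain ⟨i0, hi0⟩ := hl.1
  have hl0 : 0 ≤ l := hi0 ▸ hlam i0
  set φ0 : Fin d1 × Fin d2 → ℂ := fun x => e i0 x.1 * f i0 x.2 with hφ0
  have hee : inn (e i0) (e i0) = 1 := by simpa using he i0 i0
  have hff : inn (f i0) (f i0) = 1 := by simpa using hf i0 i0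
  have hunit : IsUnitVec φ0 := by
    rw [IsUnitVec, hφ0, inn_prod_factor, hee, hff, one_mul]
  have hinnφ0 : inn φ0 ψ = (l : ℂ) := by
    rw [hφ0, inn_prodvec_psi (e i0) (f i0) lam e f ψ hdecomp]
    rw [Finset.sum_eq_single i0
      (fun i _ hne => by simp [he, hf, Ne.symm hne])
      (fun h => absurd (Finset.mem_univ i0) h)]
    rw [hee, hff, hi0]
    ring
  have hsep0 : IsSepState2 (proj φ0) := by
    refine ⟨1, fun _ => 1, fun _ => φ0, fun _ => zero_le_one, by simp,
      fun _ => ⟨⟨e i0, f i0, fun x => rfl⟩, hunit⟩, by simp⟩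
  have hfid0 : fid (proj ψ) (proj φ0) = l ^ 2 := by
    rw [fid_proj_eq ψ hψ _ (proj_posSemidef φ0), quad_proj, hinnφ0,
      Complex.star_def, Complex.conj_ofReal, ← Complex.ofReal_mul, Complex.ofReal_re, sq]
  have hub : ∀ x ∈ {x | ∃ σ, IsSepState2 σ ∧ x = fid (proj ψ) σ}, x ≤ l ^ 2 := by
    rintro x ⟨σ, hσ, rfl⟩
    obtain ⟨k', p, φ, hp, hp1, hφ, hσeq⟩ := hσ
    rw [fid_proj_eq ψ hψ σ (sep_psd ⟨k', p, φ, hp, hp1, hφ, hσeq⟩), hσeq, quad_sum_eq]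
    calc ∑ i, p i * Complex.normSq (inn (φ i) ψ)
        ≤ ∑ i, p i * l ^ 2 := by
          refine Finset.sum_le_sum fun i _ => ?_
          refine mul_le_mul_of_nonneg_left ?_ (hp i)
          obtain ⟨⟨a, b, hab⟩, hu⟩ := hφ i
          have hfe : φ i = fun x => a x.1 * b x.2 := funext hab
          rw [hfe]
          refine prod_bound lam hlam e f he hf ψ hdecomp l hl a b ?_
          rw [← inn_prod_factor]
          rw [IsUnitVec, hfe] at hu
          exact hu
      _ = l ^ 2 := by rw [← Finset.sum_mul, hp1, one_mul]
  rw [Fsep2]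
  exact IsGreatest.csSup_eq ⟨⟨proj φ0, hsep0, hfid0.symm⟩, hub⟩
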